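/- Let f and g be distinct binomials (each a difference of two nonzero terms, not monomials) in a polynomial ring with a fixed monomial order, and let c = gcd(in(f), in(g)) (with coefficient 1). If c divides in(f) - f and c divides in(g) - g, then the S-polynomial S(f,g) reduces to 0 with respect to {f, g}. -/

import Mathlib

open MvPolynomial

/-- Let `f = c₁x^{a₁} - c₂x^{a₂}` and `g = d₁x^{b₁} - d₂x^{b₂}` be
distinct binomials (neither a monomial, with leading exponents `a₁`, `b₁` for a fixed
monomial order `m`).  The gcd (with coefficient 1) of the initial terms is `x^{a₁ ⊓ b₁}`.
If it divides the tails `in(f) - f = c₂x^{a₂}` and `in(g) - g = d₂x^{b₂}`,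
then the S-polynomial
`S(f,g) = (in(g)/gcd)·f - (in(f)/gcd)·g = d₁x^{b₁ - a₁⊓b₁}·f - c₁x^{a₁ - a₁⊓b₁}·g`
reduces to 0 with respect to `{f, g}`: it has a standard representation
`S(f,g) = h₁f + h₂g` with `in(hᵢfᵢ) ≼ in(S(f,g))`. -/
private lemma finsupp_sub_add_comm {σ : Type*} {c u v : σ →₀ ℕ} (hu : c ≤ u) (hv : c ≤ v) :
    (u - c) + v = (v - c) + u := by
  rw [Finsupp.le_def] at hu hv
  ext x
  have h1 := hu x
  have h2 := hv x
  simp only [Finsupp.add_apply, Finsupp.tsub_apply]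
  omega

theorem stmt6 {k σ : Type*} [Field k] (m : MonomialOrder σ)
    (a₁ a₂ b₁ b₂ : σ →₀ ℕ) (c₁ c₂ d₁ d₂ : k)
    (hc₁ : c₁ ≠ 0) (hc₂ : c₂ ≠ 0) (hd₁ : d₁ ≠ 0) (hd₂ : d₂ ≠ 0)
    (ha : m.toSyn a₂ < m.toSyn a₁) (hb : m.toSyn b₂ < m.toSyn b₁)
    (f g : MvPolynomial σ k)
    (hf : f = monomial a₁ c₁ - monomial a₂ c₂)
    (hg : g = monomial b₁ d₁ - monomial b₂ d₂)
    (hfg : f ≠ g)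
    (hdivf : a₁ ⊓ b₁ ≤ a₂) (hdivg : a₁ ⊓ b₁ ≤ b₂) :
    ∃ h₁ h₂ : MvPolynomial σ k,
      monomial (b₁ - a₁ ⊓ b₁) d₁ * f - monomial (a₁ - a₁ ⊓ b₁) c₁ * g = h₁ * f + h₂ * g ∧
      (∀ e ∈ (h₁ * f).support,
        ∃ d ∈ (monomial (b₁ - a₁ ⊓ b₁) d₁ * f - monomial (a₁ - a₁ ⊓ b₁) c₁ * g).support,
          m.toSyn e ≤ m.toSyn d) ∧
      (∀ e ∈ (h₂ * g).support,
        ∃ d ∈ (monomial (b₁ - a₁ ⊓ b₁) d₁ * f - monomial (a₁ - a₁ ⊓ b₁) c₁ * g).support,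
          m.toSyn e ≤ m.toSyn d) := by
  classical
  set c := a₁ ⊓ b₁ with hc
  have hca : c ≤ a₁ := inf_le_left
  have hcb : c ≤ b₁ := inf_le_right
  set P : σ →₀ ℕ := (a₁ - c) + b₂ with hP
  set Q : σ →₀ ℕ := (b₁ - c) + a₂ with hQ
  -- the S-polynomial in closed form
  have hS : monomial (b₁ - c) d₁ * f - monomial (a₁ - c) c₁ * g
      = monomial P (c₁ * d₂) - monomial Q (c₂ * d₁) := by
    subst hf hg
    have e1 : (b₁ - c) + a₁ = (a₁ - c) + b₁ := finsupp_sub_add_comm hcb hca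
    simp only [mul_sub, monomial_mul, hP, hQ]
    rw [e1, mul_comm d₁ c₁, mul_comm d₁ c₂]
    abel
  by_cases hS0 : monomial (b₁ - c) d₁ * f - monomial (a₁ - c) c₁ * g = (0 : MvPolynomial σ k)
  · exact ⟨0, 0, by simp [hS0], by simp, by simp⟩
  · refine ⟨monomial (b₂ - c) d₂, -monomial (a₂ - c) c₂, ?_, ?_, ?_⟩
    · subst hf hg
      have e2 : (b₂ - c) + a₁ = (a₁ - c) + b₂ := finsupp_sub_add_comm hdivg hca
      have e3 : (a₂ - c) + b₁ = (b₁ - c) + a₂ := finsupp_sub_add_comm hdivf hcb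
      have e4 : (b₂ - c) + a₂ = (a₂ - c) + b₂ := finsupp_sub_add_comm hdivg hdivf
      rw [hS]
      simp only [mul_sub, neg_mul, monomial_mul, hP, hQ]
      rw [e2, e3, e4, mul_comm d₂ c₁, mul_comm d₂ c₂, mul_comm c₂ d₂]
      abel
    · intro e he
      refine ⟨P, ?_, ?_⟩
      · rw [hS, mem_support_iff]
        by_cases hPQ : P = Q
        · rw [coeff_sub, hPQ, coeff_monomial, coeff_monomial, if_pos rfl, if_pos rfl]
          intro h0
          apply hS0
          rw [hS, hPQ, ← map_sub, h0, map_zero]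
        · rw [coeff_sub, coeff_monomial, coeff_monomial, if_pos rfl, if_neg (by exact fun h => hPQ h.symm)]
          simpa using mul_ne_zero hc₁ hd₂
      · -- e ∈ support (monomial (b₂-c) d₂ * f), so e = (b₂-c)+a₁ or (b₂-c)+a₂
        rw [mem_support_iff] at he
        rw [hf, mul_sub, monomial_mul, monomial_mul, coeff_sub] at he
        have e2 : (b₂ - c) + a₁ = P := finsupp_sub_add_comm hdivg hca
        rcases eq_or_ne e ((b₂ - c) + a₁) with h | h
        · rw [h, e2]
        · rcases eq_or_ne e ((b₂ - c) + a₂) with h' | h'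
          · rw [h', ← e2, map_add, map_add]
            exact add_le_add le_rfl ha.le
          · exfalso; apply he
            rw [coeff_monomial, coeff_monomial, if_neg (fun hh => h hh.symm),
              if_neg (fun hh => h' hh.symm), sub_zero]
    · intro e he
      refine ⟨Q, ?_, ?_⟩
      · rw [hS, mem_support_iff]
        by_cases hPQ : P = Q
        · rw [coeff_sub, ← hPQ, coeff_monomial, coeff_monomial, if_pos rfl, if_pos rfl]
          intro h0
          apply hS0
          rw [hS, hPQ, ← map_sub, h0, map_zero]
        · rw [coeff_sub, coeff_monomial, coeff_monomial, if_neg hPQ, if_pos rfl]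
          simpa using mul_ne_zero hc₂ hd₁
      · rw [mem_support_iff] at he
        rw [hg, neg_mul, mul_sub, monomial_mul, monomial_mul] at he
        have e3 : (a₂ - c) + b₁ = Q := finsupp_sub_add_comm hdivf hcb
        rcases eq_or_ne e ((a₂ - c) + b₁) with h | h
        · rw [h, e3]
        · rcases eq_or_ne e ((a₂ - c) + b₂) with h' | h'
          · rw [h', ← e3, map_add, map_add]
            exact add_le_add le_rfl hb.le
          · exfalso; apply he
            rw [coeff_neg, coeff_sub, coeff_monomial, coeff_monomial,
              if_neg (fun hh => h hh.symm), if_neg (fun hh => h' hh.symm), sub_zero, neg_zero]
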